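/- arXiv:2001.10989 — 2 statements merged into one kernel-verified Lean document; each statement's English description precedes it below -/
import Mathlib

section
/- Let b and s be vectors in the positive orthant of R^d, and suppose that s_j < K·b_j for every coordinate j, where K > 0. Then the cosine of the angle between b and s+b is strictly greater than 1/(1 + K·√d). -/
theorem cos_angle_lower_bound (d : ℕ) (hd : 0 < d) (K : ℝ) (hK : 0 < K)
    (b s : EuclideanSpace ℝ (Fin d))
    (hb : ∀ j, 0 < b j) (hs : ∀ j, 0 < s j) (hsb : ∀ j, s j < K * b j) :
    1 / (1 + K * Real.sqrt d) < (inner ℝ b (s + b) : ℝ) / (‖b‖ * ‖s + b‖) := by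
  have hbpos : 0 < ‖b‖ := by
    rw [norm_pos_iff]
    intro h
    have h0 := hb ⟨0, hd⟩
    rw [h] at h0
    simp at h0
  have hd1 : (1 : ℝ) ≤ Real.sqrt d := by
    rw [show (1 : ℝ) = Real.sqrt 1 by simp]
    exact Real.sqrt_le_sqrt (by exact_mod_cast hd)
  have hsK : ‖s‖ < K * ‖b‖ := by
    have h1 : ‖s‖ ^ 2 < (K * ‖b‖) ^ 2 := by
      rw [EuclideanSpace.norm_eq, EuclideanSpace.norm_eq,
        Real.sq_sqrt (by positivity), mul_pow, Real.sq_sqrt (by positivity)]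
      simp only [Real.norm_eq_abs, sq_abs]
      calc ∑ j, s j ^ 2 < ∑ j, K ^ 2 * b j ^ 2 :=
            Finset.sum_lt_sum_of_nonempty ⟨⟨0, hd⟩, Finset.mem_univ _⟩
              (fun j _ => by nlinarith [hb j, hs j, hsb j])
        _ = K ^ 2 * ∑ j, b j ^ 2 := by rw [Finset.mul_sum]
    nlinarith [norm_nonneg s, mul_pos hK hbpos]
  have hsb' : ‖s + b‖ < (1 + K * Real.sqrt d) * ‖b‖ := by
    calc ‖s + b‖ ≤ ‖s‖ + ‖b‖ := norm_add_le _ _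
      _ < K * ‖b‖ + ‖b‖ := by linarith
      _ ≤ (1 + K * Real.sqrt d) * ‖b‖ := by nlinarith [mul_le_mul_of_nonneg_right (mul_le_mul_of_nonneg_left hd1 hK.le) hbpos.le]
  have hinner : ‖b‖ ^ 2 < (inner ℝ b (s + b) : ℝ) := by
    rw [inner_add_right, real_inner_self_eq_norm_sq]
    have hpos : (0 : ℝ) < inner ℝ b s := by
      rw [PiLp.inner_apply]
      simp only [RCLike.inner_apply, conj_trivial]
      exact Finset.sum_pos (fun j _ => mul_pos (hs j) (hb j))
        ⟨⟨0, hd⟩, Finset.mem_univ _⟩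
    linarith
  have hsbpos : 0 < ‖s + b‖ := by
    rw [norm_pos_iff]
    intro h
    have h0 : (s + b) ⟨0, hd⟩ = 0 := by rw [h]; rfl
    have : s ⟨0, hd⟩ + b ⟨0, hd⟩ = 0 := h0
    nlinarith [hs ⟨0, hd⟩, hb ⟨0, hd⟩]
  have hden : 0 < ‖b‖ * ‖s + b‖ := mul_pos hbpos hsbpos
  rw [div_lt_div_iff₀ (by positivity) hden]
  nlinarith [mul_pos hK (Real.sqrt_pos.mpr (by exact_mod_cast hd : (0:ℝ) < d))]
end

section
/- Let (Δ_k) be a sequence of subsets of R^d with Δ_k = P_1 P_2 ⋯ P_k Λ^d, where each P_k is a positive invertible d×d matrix and Λ^d is the open positive orthant. Then the intersection ⋂_{k∈N} Δ_k is nonempty. -/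
private lemma posMat_mulVec {d : ℕ} (M : Matrix (Fin d) (Fin d) ℝ)
    (hM : ∀ i j, 0 < M i j) (y : Fin d → ℝ) (h0 : ∀ i, 0 ≤ y i)
    (hne : ∃ i, 0 < y i) : ∀ i, 0 < M.mulVec y i := by
  intro i
  obtain ⟨j, hj⟩ := hne
  have : M.mulVec y i = ∑ j, M i j * y j := rfl
  rw [this]
  exact Finset.sum_pos' (fun k _ => mul_nonneg (hM i k).le (h0 k))
    ⟨j, Finset.mem_univ j, mul_pos (hM i j) hj⟩

theorem iInter_positive_cones_nonempty (d : ℕ)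
    (P : ℕ → Matrix (Fin d) (Fin d) ℝ)
    (hpos : ∀ k i j, 0 < P k i j) (hinv : ∀ k, IsUnit (P k)) :
    (⋂ k : ℕ,
        (((List.range (k + 1)).map P).prod).mulVec ''
          {x : Fin d → ℝ | ∀ i, 0 < x i}).Nonempty := by
  rcases Nat.eq_zero_or_pos d with hd | hd
  · subst hd
    refine ⟨0, Set.mem_iInter.2 fun k => ⟨0, fun i => i.elim0, ?_⟩⟩
    ext i; exact i.elim0
  haveI : Nonempty (Fin d) := ⟨⟨0, hd⟩⟩
  set A : ℕ → Matrix (Fin d) (Fin d) ℝ := fun k => ((List.range (k + 1)).map P).prod with hA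
  have hAsucc : ∀ k, A (k + 1) = A k * P (k + 1) := by
    intro k
    simp [hA, List.range_succ]
  -- positivity of A k applied to nonneg nonzero vectors
  have hApos : ∀ k (y : Fin d → ℝ), (∀ i, 0 ≤ y i) → (∃ i, 0 < y i) →
      ∀ i, 0 < (A k).mulVec y i := by
    intro k
    induction k with
    | zero =>
      intro y h0 hne
      have : A 0 = P 0 := by simp [hA, List.range_succ]
      rw [this]
      exact posMat_mulVec _ (hpos 0) y h0 hne
    | succ k ih =>
      intro y h0 hne
      have hw := posMat_mulVec _ (hpos (k + 1)) y h0 hne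
      have : (A (k + 1)).mulVec y = (A k).mulVec ((P (k + 1)).mulVec y) := by
        rw [hAsucc, ← Matrix.mulVec_mulVec]
      rw [this]
      exact ih _ (fun i => (hw i).le) ⟨⟨0, hd⟩, hw ⟨0, hd⟩⟩
  -- the normalized maps and compact sets
  set S : Set (Fin d → ℝ) := stdSimplex ℝ (Fin d) with hS
  have hSmem : ∀ y ∈ S, (∀ i, 0 ≤ y i) ∧ ∃ i, 0 < y i := by
    intro y hy
    refine ⟨hy.1, ?_⟩
    by_contra h
    push_neg at h
    have : ∑ i, y i ≤ 0 := Finset.sum_nonpos (fun i _ => h i)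
    rw [hy.2] at this; linarith
  set g : ℕ → (Fin d → ℝ) → (Fin d → ℝ) :=
    fun k y => (∑ i, (A k).mulVec y i)⁻¹ • (A k).mulVec y with hg
  set K : ℕ → Set (Fin d → ℝ) := fun k => g k '' S with hK
  have hsumpos : ∀ k y, y ∈ S → 0 < ∑ i, (A k).mulVec y i := by
    intro k y hy
    obtain ⟨h0, hne⟩ := hSmem y hy
    exact Finset.sum_pos (fun i _ => hApos k y h0 hne i) Finset.univ_nonempty
  have hKcompact : ∀ k, IsCompact (K k) := by
    intro k
    apply (isCompact_stdSimplex ℝ (Fin d)).image_of_continuousOn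
    show ContinuousOn ((fun y : Fin d → ℝ => (∑ i, (A k).mulVec y i)⁻¹) • (fun y : Fin d → ℝ => (A k).mulVec y)) (stdSimplex ℝ (Fin d))
    apply ContinuousOn.smul
    · have hcont : Continuous fun y : Fin d → ℝ => (A k).mulVec y :=
        (Matrix.mulVecLin (A k)).continuous_of_finiteDimensional
      apply ContinuousOn.inv₀
      · exact (continuous_finset_sum _ fun i _ =>
          (continuous_apply i).comp hcont).continuousOn
      · intro y hy; exact (hsumpos k y hy).ne'
    · exact (Matrix.mulVecLin (A k)).continuous_of_finiteDimensional.continuousOn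
  have hKnonempty : ∀ k, (K k).Nonempty := by
    intro k
    refine ⟨g k (fun _ => (d : ℝ)⁻¹), ⟨fun _ => (d : ℝ)⁻¹, ⟨?_, ?_⟩, rfl⟩⟩
    · intro i; positivity
    · rw [Finset.sum_const, Finset.card_univ, Fintype.card_fin, nsmul_eq_mul]
      field_simp
  -- nestedness
  have hnested : ∀ k, K (k + 1) ⊆ K k := by
    rintro k _ ⟨y, hy, rfl⟩
    obtain ⟨h0, hne⟩ := hSmem y hy
    set w := (P (k + 1)).mulVec y with hw
    have hwpos : ∀ i, 0 < w i := posMat_mulVec _ (hpos (k + 1)) y h0 hne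
    set s := ∑ i, w i with hs
    have hspos : 0 < s := Finset.sum_pos (fun i _ => hwpos i) Finset.univ_nonempty
    have hy' : s⁻¹ • w ∈ S := by
      constructor
      · intro i
        exact smul_nonneg (inv_nonneg.2 hspos.le) (hwpos i).le
      · simp only [Pi.smul_apply, smul_eq_mul, ← Finset.mul_sum]
        field_simp
        exact hs.symm
    refine ⟨s⁻¹ • w, hy', ?_⟩
    have hmv : (A (k + 1)).mulVec y = (A k).mulVec w := by
      rw [hAsucc, ← Matrix.mulVec_mulVec]
    have hlin : (A k).mulVec (s⁻¹ • w) = s⁻¹ • (A k).mulVec w := by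
      rw [Matrix.mulVec_smul]
    simp only [hg, hlin, hmv]
    have hsum : ∑ i, (s⁻¹ • (A k).mulVec w) i = s⁻¹ * ∑ i, (A k).mulVec w i := by
      simp [Finset.mul_sum]
    rw [hsum, smul_smul, mul_inv, inv_inv]
    congr 1
    have hTpos : 0 < ∑ i, (A k).mulVec w i :=
      Finset.sum_pos (fun i _ => hApos k w (fun i => (hwpos i).le) ⟨_, hwpos ⟨0, hd⟩⟩ i)
        Finset.univ_nonempty
    field_simp
  obtain ⟨z, hz⟩ := IsCompact.nonempty_iInter_of_sequence_nonempty_isCompact_isClosed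
    K hnested hKnonempty (hKcompact 0) (fun k => (hKcompact k).isClosed)
  refine ⟨z, Set.mem_iInter.2 fun k => ?_⟩
  have hz1 : z ∈ K (k + 1) := Set.mem_iInter.1 hz (k + 1)
  obtain ⟨y, hy, rfl⟩ := hz1
  obtain ⟨h0, hne⟩ := hSmem y hy
  set c := ∑ i, (A (k + 1)).mulVec y i with hc
  have hcpos : 0 < c := hsumpos (k + 1) y hy
  refine ⟨c⁻¹ • (P (k + 1)).mulVec y, ?_, ?_⟩
  · intro i
    have := posMat_mulVec _ (hpos (k + 1)) y h0 hne i
    exact mul_pos (inv_pos.2 hcpos) this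
  · simp only [hg, Matrix.mulVec_smul]
    have heq : ((List.range (k + 1)).map P).prod.mulVec ((P (k + 1)).mulVec y)
        = (A (k + 1)).mulVec y := by
      rw [Matrix.mulVec_mulVec]
      exact congrArg (fun M => M.mulVec y) (hAsucc k).symm
    rw [heq, hc]
end
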